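/- Let k ∈ ℕ, let x₁,…,x_k ∈ ℝ², let t₁,…,t_k ≥ 0 with ∑_{i=1}^k t_i = 1, let λ ≥ 0, and define v : ℝ² → ℝ by v(x) = log( ∑_{i=1}^k t_i (1 + λ² ‖x − x_i‖²)^{−2} ). Then for every x ∈ ℝ² with x ∉ {x₁,…,x_k} one has ‖∇v(x)‖ ≤ 4 / d_min(x), where d_min(x) = min_{i=1,…,k} ‖x − x_i‖. -/

import Mathlib

set_option synthInstance.maxHeartbeats 1000000
set_option maxHeartbeats 2000000

/-- The function `v(x) = log ( ∑ᵢ tᵢ (1 + λ² ‖x − xᵢ‖²)⁻² )` on `ℝ²`. -/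
noncomputable def todaTestFun (k : ℕ) (t : Fin k → ℝ)
    (p : Fin k → EuclideanSpace ℝ (Fin 2)) (lam : ℝ)
    (x : EuclideanSpace ℝ (Fin 2)) : ℝ :=
  Real.log (∑ i, t i * ((1 + lam ^ 2 * ‖x - p i‖ ^ 2) ^ 2)⁻¹)

/-- away from the points `xᵢ`, the gradient of `v` is bounded in norm by
`4 / d_min(x)`, where `d_min(x) = minᵢ ‖x − xᵢ‖`. -/
theorem gradient_bound_of_todaTestFun_away (k : ℕ) (t : Fin k → ℝ)
    (p : Fin k → EuclideanSpace ℝ (Fin 2))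
    (ht : ∀ i, 0 ≤ t i) (htsum : ∑ i, t i = 1)
    (lam : ℝ) (hlam : 0 ≤ lam)
    (x : EuclideanSpace ℝ (Fin 2)) (hx : x ∉ Set.range p) :
    ‖gradient (todaTestFun k t p lam) x‖ ≤ 4 / Metric.infDist x (Set.range p) := by
  classical
  have hk : k ≠ 0 := by
    rintro rfl
    simp at htsum
  have hne : (Set.range p).Nonempty := Set.range_nonempty_iff_nonempty.mpr
    ⟨⟨0, Nat.pos_of_ne_zero hk⟩⟩
  set d := Metric.infDist x (Set.range p) with hd
  have hdle : ∀ i, d ≤ ‖x - p i‖ := by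
    intro i
    rw [← dist_eq_norm]
    exact Metric.infDist_le_dist_of_mem ⟨i, rfl⟩
  have hdpos : 0 < d :=
    ((Set.finite_range p).isClosed.notMem_iff_infDist_pos hne).mp hx
  set A : Fin k → ℝ := fun i => 1 + lam ^ 2 * ‖x - p i‖ ^ 2 with hA
  have hApos : ∀ i, 0 < A i := fun i => by positivity
  set S : EuclideanSpace ℝ (Fin 2) → ℝ := fun y => ∑ i, t i * ((1 + lam ^ 2 * ‖y - p i‖ ^ 2) ^ 2)⁻¹ with hS
  have hSpos : 0 < S x := by
    have hex : ∃ i, 0 < t i := by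
      by_contra h
      push_neg at h
      have : ∀ i, t i = 0 := fun i => le_antisymm (h i) (ht i)
      simp [this] at htsum
    obtain ⟨i, hi⟩ := hex
    refine Finset.sum_pos' (fun j _ => mul_nonneg (ht j) (by positivity)) ⟨i, Finset.mem_univ i, ?_⟩
    have : (0:ℝ) < ((1 + lam ^ 2 * ‖x - p i‖ ^ 2) ^ 2)⁻¹ := by positivity
    exact mul_pos hi this
  -- derivative of each summand
  have hderiv : ∀ i : Fin k,
      HasFDerivAt (fun y : EuclideanSpace ℝ (Fin 2) => t i * ((1 + lam ^ 2 * ‖y - p i‖ ^ 2) ^ 2)⁻¹)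
        ((t i * (-4 * lam ^ 2 * ((A i) ^ 3)⁻¹)) • innerSL ℝ (x - p i)) x := by
    intro i
    have h0 : HasFDerivAt (fun y : EuclideanSpace ℝ (Fin 2) => ‖y - p i‖ ^ 2) (2 • (innerSL ℝ (x - p i))) x := by
      have := ((hasFDerivAt_id x).sub_const (p i)).norm_sq
      simpa using this
    have hApos' : (0:ℝ) < 1 + lam ^ 2 * ‖x - p i‖ ^ 2 := hApos i
    have h1 : HasDerivAt (fun s : ℝ => ((1 + lam ^ 2 * s) ^ 2)⁻¹)
        (-(2 * lam ^ 2 * ((A i) ^ 3)⁻¹)) (‖x - p i‖ ^ 2) := by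
      have ha : HasDerivAt (fun s : ℝ => 1 + lam ^ 2 * s) (lam ^ 2) (‖x - p i‖ ^ 2) := by
        simpa using ((hasDerivAt_id (‖x - p i‖ ^ 2)).const_mul (lam ^ 2)).const_add 1
      have hb := ha.pow 2
      have hne2 : (1 + lam ^ 2 * ‖x - p i‖ ^ 2) ^ 2 ≠ 0 := by positivity
      have hc := hb.inv hne2
      refine HasDerivAt.congr_deriv hc ?_
      rw [hA, Pi.pow_apply]
      field_simp
      ring
    have h2 := h1.comp_hasFDerivAt x h0
    have h3 := h2.const_mul (t i)
    refine h3.congr_fderiv ?_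
    ext w
    simp only [ContinuousLinearMap.smul_apply, ContinuousLinearMap.coe_smul', Pi.smul_apply,
      smul_eq_mul, nsmul_eq_mul, Nat.cast_ofNat]
    ring
  have hSd : HasFDerivAt S
      (∑ i, (t i * (-4 * lam ^ 2 * ((A i) ^ 3)⁻¹)) • innerSL ℝ (x - p i)) x :=
    HasFDerivAt.fun_sum (fun i _ => hderiv i)
  have hlog := (Real.hasDerivAt_log hSpos.ne').comp_hasFDerivAt x hSd
  have hv : HasFDerivAt (todaTestFun k t p lam)
      ((S x)⁻¹ • ∑ i, (t i * (-4 * lam ^ 2 * ((A i) ^ 3)⁻¹)) • innerSL ℝ (x - p i)) x := by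
    exact hlog
  have hnorm : ‖gradient (todaTestFun k t p lam) x‖ =
      ‖(S x)⁻¹ • ∑ i, (t i * (-4 * lam ^ 2 * ((A i) ^ 3)⁻¹)) • innerSL ℝ (x - p i)‖ := by
    rw [gradient, hv.fderiv]
    exact LinearIsometryEquiv.norm_map _ _
  have e1 : ‖(S x)⁻¹ • ∑ i, (t i * (-4 * lam ^ 2 * ((A i) ^ 3)⁻¹)) • innerSL ℝ (x - p i)‖
      = (S x)⁻¹ * ‖∑ i, (t i * (-4 * lam ^ 2 * ((A i) ^ 3)⁻¹)) • innerSL ℝ (x - p i)‖ := by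
    rw [norm_smul ((S x)⁻¹)
      (∑ i, (t i * (-4 * lam ^ 2 * ((A i) ^ 3)⁻¹)) • innerSL ℝ (x - p i)),
      Real.norm_eq_abs, abs_of_nonneg (inv_nonneg.mpr hSpos.le)]
  rw [hnorm, e1]
  have hsum : ‖∑ i, (t i * (-4 * lam ^ 2 * ((A i) ^ 3)⁻¹)) • innerSL ℝ (x - p i)‖ ≤
      ∑ i, (4 / d) * (t i * ((A i) ^ 2)⁻¹) := by
    refine (norm_sum_le _ _).trans (Finset.sum_le_sum fun i _ => ?_)
    rw [norm_smul (t i * (-4 * lam ^ 2 * ((A i) ^ 3)⁻¹)) (innerSL ℝ (x - p i)),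
      Real.norm_eq_abs, innerSL_apply_norm]
    have habs : |t i * (-4 * lam ^ 2 * ((A i) ^ 3)⁻¹)| =
        t i * (4 * lam ^ 2 * ((A i) ^ 3)⁻¹) := by
      rw [abs_mul, abs_of_nonneg (ht i)]
      congr 1
      rw [show (-4 * lam ^ 2 * ((A i) ^ 3)⁻¹) = -(4 * lam ^ 2 * ((A i) ^ 3)⁻¹) by ring,
        abs_neg, abs_of_nonneg (by positivity)]
    set r := ‖x - p i‖ with hr
    have hrd : d ≤ r := hdle i
    have hApos' := hApos i
    have hkey : lam ^ 2 * r * d ≤ A i := by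
      have h1 : lam ^ 2 * r * d ≤ lam ^ 2 * r * r :=
        mul_le_mul_of_nonneg_left hrd (by positivity)
      have h2 : lam ^ 2 * r * r ≤ A i := by
        show lam ^ 2 * r * r ≤ 1 + lam ^ 2 * ‖x - p i‖ ^ 2
        rw [← hr]
        nlinarith [sq_nonneg r]
      exact h1.trans h2
    rw [habs]
    have base : 4 * lam ^ 2 * ((A i) ^ 3)⁻¹ * r ≤ 4 / d * ((A i) ^ 2)⁻¹ := by
      rw [div_mul_eq_mul_div, le_div_iff₀ hdpos]
      have h3 : ((A i) ^ 3)⁻¹ = ((A i) ^ 2)⁻¹ * (A i)⁻¹ := by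
        rw [pow_succ, mul_inv]
      rw [h3]
      have h4 : 4 * lam ^ 2 * r * d ≤ 4 * A i := by linarith
      calc 4 * lam ^ 2 * (((A i) ^ 2)⁻¹ * (A i)⁻¹) * r * d
          = (4 * lam ^ 2 * r * d) * ((A i)⁻¹ * ((A i) ^ 2)⁻¹) := by ring
        _ ≤ (4 * A i) * ((A i)⁻¹ * ((A i) ^ 2)⁻¹) := by
            apply mul_le_mul_of_nonneg_right h4 (by positivity)
        _ = 4 * ((A i) ^ 2)⁻¹ := by field_simp
    calc t i * (4 * lam ^ 2 * ((A i) ^ 3)⁻¹) * r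
        = t i * (4 * lam ^ 2 * ((A i) ^ 3)⁻¹ * r) := by ring
      _ ≤ t i * (4 / d * ((A i) ^ 2)⁻¹) := mul_le_mul_of_nonneg_left base (ht i)
      _ = 4 / d * (t i * ((A i) ^ 2)⁻¹) := by ring
  have hSx : ∑ i, (4 / d) * (t i * ((A i) ^ 2)⁻¹) = 4 / d * S x := by
    rw [hS, Finset.mul_sum]
  calc (S x)⁻¹ * ‖∑ i, (t i * (-4 * lam ^ 2 * ((A i) ^ 3)⁻¹)) • innerSL ℝ (x - p i)‖
      ≤ (S x)⁻¹ * (4 / d * S x) :=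
        mul_le_mul_of_nonneg_left (hsum.trans_eq hSx) (inv_nonneg.mpr hSpos.le)
    _ = 4 / d := by field_simp
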